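/- Let R = ℤ[s, s⁻¹, t, t⁻¹]. Then the additive group of R/(R·(1 − s + s²) + R·((1 + st)(1 − t))) is free abelian of rank 4. -/

import Mathlib

/-- `R = ℤ[s,s⁻¹,t,t⁻¹]`, the group ring of the free abelian group of rank 2. -/
noncomputable abbrev GroupRingZ2 : Type := AddMonoidAlgebra ℤ (ℤ × ℤ)

/-- The generator `s` of the group ring. -/
noncomputable def sGen : GroupRingZ2 := AddMonoidAlgebra.single (1, 0) 1

/-- The generator `t` of the group ring. -/
noncomputable def tGen : GroupRingZ2 := AddMonoidAlgebra.single (0, 1) 1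

open Polynomial AdjoinRoot AddMonoidAlgebra

/-- The minimal polynomial of `ζ₆`. -/
noncomputable def fA : Polynomial ℤ := X ^ 2 - X + 1

/-- `ℤ[ζ₆]`. -/
noncomputable abbrev RingA : Type := AdjoinRoot fA

noncomputable def aRt : RingA := root fA

lemma aRt_def : aRt = root fA := rfl

/-- The minimal polynomial of `t` over `ℤ[ζ₆]`. -/
noncomputable def gC : Polynomial RingA := X ^ 2 - C aRt * X - C (1 - aRt)

/-- The target ring, free of rank `2` over `ℤ[ζ₆]`. -/
noncomputable abbrev RingC : Type := AdjoinRoot gC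

lemma fA_monic : fA.Monic := by
  have h : fA = X ^ 2 - (X - 1) := by rw [fA]; ring
  rw [h]
  refine Polynomial.monic_X_pow_sub ?_
  calc degree ((X : Polynomial ℤ) - 1) ≤ 1 := by
        simpa using Polynomial.degree_sub_le (X : Polynomial ℤ) 1
  _ < 2 := by norm_num

lemma fA_natDegree : fA.natDegree = 2 := by
  unfold fA; compute_degree!

lemma fA_degree : fA.degree = 2 := by
  unfold fA; compute_degree!

instance : Nontrivial RingA :=
  AdjoinRoot.nontrivial fA (by rw [fA_degree]; norm_num)

lemma gC_monic : gC.Monic := by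
  have h : gC = X ^ 2 - (C aRt * X + C (1 - aRt)) := by rw [gC]; ring
  rw [h]
  refine Polynomial.monic_X_pow_sub ?_
  calc degree (C aRt * X + C (1 - aRt)) ≤ 1 := Polynomial.degree_linear_le
  _ < 2 := by norm_num

lemma gC_natDegree : gC.natDegree = 2 := by
  have h : gC = X ^ 2 - (C aRt * X + C (1 - aRt)) := by rw [gC]; ring
  rw [h, Polynomial.natDegree_sub_eq_left_of_natDegree_lt, natDegree_X_pow]
  rw [natDegree_X_pow]
  calc (C aRt * X + C (1 - aRt)).natDegree ≤ 1 := Polynomial.natDegree_linear_le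
  _ < 2 := by norm_num

lemma aRt_rel : aRt ^ 2 - aRt + 1 = 0 := by
  have h : AdjoinRoot.mk fA fA = 0 := AdjoinRoot.mk_self
  rw [fA, map_add, map_sub, map_pow, AdjoinRoot.mk_X, map_one] at h
  rw [aRt_def]
  exact h

noncomputable def aC : RingC := AdjoinRoot.of gC aRt

noncomputable def rC : RingC := root gC

lemma aC_def : aC = AdjoinRoot.of gC aRt := rfl
lemma rC_def : rC = root gC := rfl

lemma aC_rel : aC ^ 2 - aC + 1 = 0 := by
  have h := congrArg (AdjoinRoot.of gC) aRt_rel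
  rw [map_add, map_sub, map_pow, map_one, map_zero] at h
  rw [aC_def]
  exact h

lemma rC_rel : rC ^ 2 - aC * rC - (1 - aC) = 0 := by
  have h : AdjoinRoot.mk gC (X ^ 2 - C aRt * X - C (1 - aRt)) = 0 := AdjoinRoot.mk_self
  simp only [map_sub, map_pow, map_mul, map_one, AdjoinRoot.mk_X, AdjoinRoot.mk_C] at h
  rw [aC_def, rC_def]
  linear_combination h

/-- `a` is a unit in `RingC`. -/
noncomputable def uC : RingCˣ :=
  ⟨aC, 1 - aC, by linear_combination -aC_rel, by linear_combination -aC_rel⟩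

/-- `r` is a unit in `RingC`. -/
noncomputable def vC : RingCˣ :=
  ⟨rC, aC * rC - aC ^ 2,
    by linear_combination aC * rC_rel - aC_rel,
    by linear_combination aC * rC_rel - aC_rel⟩

/-- From a pair of units in a commutative monoid, a monoid hom on `Multiplicative (ℤ × ℤ)`. -/
noncomputable def pairHom {M : Type*} [CommMonoid M] (u v : Mˣ) :
    Multiplicative (ℤ × ℤ) →* M where
  toFun p := ((u ^ (Multiplicative.toAdd p).1 * v ^ (Multiplicative.toAdd p).2 : Mˣ) : M)
  map_one' := by simp
  map_mul' x y := by
    push_cast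
    rw [show (Multiplicative.toAdd (x * y)) = Multiplicative.toAdd x + Multiplicative.toAdd y
      from rfl]
    simp only [Prod.fst_add, Prod.snd_add, zpow_add, Units.val_mul]
    exact mul_mul_mul_comm _ _ _ _

lemma pairHom_ofAdd {M : Type*} [CommMonoid M] (u v : Mˣ) (p : ℤ × ℤ) :
    pairHom u v (Multiplicative.ofAdd p) = ((u ^ p.1 * v ^ p.2 : Mˣ) : M) := rfl

/-- The algebra map `R → C`. -/
noncomputable def phi : GroupRingZ2 →ₐ[ℤ] RingC :=
  AddMonoidAlgebra.lift ℤ RingC (ℤ × ℤ) (pairHom uC vC)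

lemma phi_single (p : ℤ × ℤ) :
    phi (AddMonoidAlgebra.single p 1) = ((uC ^ p.1 * vC ^ p.2 : RingCˣ) : RingC) := by
  rw [phi, AddMonoidAlgebra.lift_single, pairHom_ofAdd, one_smul]

lemma phi_sGen : phi sGen = aC := by
  rw [sGen, phi_single]; simp [uC]

lemma phi_tGen : phi tGen = rC := by
  rw [tGen, phi_single]; simp [vC]

noncomputable def idealI : Ideal GroupRingZ2 :=
  Ideal.span {1 - sGen + sGen ^ 2, (1 + sGen * tGen) * (1 - tGen)}

noncomputable abbrev RingQ : Type := GroupRingZ2 ⧸ idealI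

noncomputable def mkQ : GroupRingZ2 →+* RingQ := Ideal.Quotient.mk idealI

lemma mkQ_def : mkQ = Ideal.Quotient.mk idealI := rfl

lemma hker : idealI ≤ RingHom.ker (phi.toRingHom) := by
  rw [idealI, Ideal.span_le]
  rintro x hx
  simp only [Set.mem_insert_iff, Set.mem_singleton_iff] at hx
  rcases hx with rfl | rfl <;>
    simp only [SetLike.mem_coe, RingHom.mem_ker, AlgHom.toRingHom_eq_coe, RingHom.coe_coe,
      map_add, map_sub, map_mul, map_pow, map_one, phi_sGen, phi_tGen]
  · linear_combination aC_rel
  · linear_combination (1 - rC) * aC_rel - aC * rC_rel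

/-- Induced map `Q → C`. -/
noncomputable def PhiQ : RingQ →+* RingC :=
  Ideal.Quotient.lift idealI phi.toRingHom hker

lemma PhiQ_mk (x : GroupRingZ2) : PhiQ (mkQ x) = phi x :=
  Ideal.Quotient.lift_mk idealI _ _

noncomputable def sQ : RingQ := mkQ sGen
noncomputable def tQ : RingQ := mkQ tGen
noncomputable def sQinv : RingQ := mkQ (AddMonoidAlgebra.single (-1, 0) 1)

lemma single_mul_single' (p q : ℤ × ℤ) :
    (AddMonoidAlgebra.single p 1 * AddMonoidAlgebra.single q 1 : GroupRingZ2)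
      = AddMonoidAlgebra.single (p + q) 1 := by
  rw [AddMonoidAlgebra.single_mul_single, one_mul]

lemma hsQ : sQinv * sQ = 1 := by
  rw [sQinv, sQ, sGen, ← map_mul, single_mul_single',
    show ((-1, 0) : ℤ × ℤ) + (1, 0) = 0 by simp, ← AddMonoidAlgebra.one_def, map_one]

lemma hQ1 : 1 - sQ + sQ ^ 2 = 0 := by
  have h : mkQ (1 - sGen + sGen ^ 2) = 0 :=
    Ideal.Quotient.eq_zero_iff_mem.mpr (Ideal.subset_span (by simp))
  rw [map_add, map_sub, map_pow, map_one] at h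
  exact h

lemma hQ2 : (1 + sQ * tQ) * (1 - tQ) = 0 := by
  have h : mkQ ((1 + sGen * tGen) * (1 - tGen)) = 0 :=
    Ideal.Quotient.eq_zero_iff_mem.mpr (Ideal.subset_span (by simp))
  rw [map_mul, map_add, map_sub, map_mul, map_one] at h
  exact h

lemma fA_eval : fA.eval₂ (Int.castRingHom RingQ) sQ = 0 := by
  rw [fA]
  simp only [eval₂_add, eval₂_sub, eval₂_pow, eval₂_X, eval₂_one]
  linear_combination hQ1

/-- The map `A → Q`. -/
noncomputable def psi0 : RingA →+* RingQ :=
  AdjoinRoot.lift (Int.castRingHom RingQ) sQ fA_eval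

lemma psi0_aRt : psi0 aRt = sQ := AdjoinRoot.lift_root fA_eval

lemma gC_eval : gC.eval₂ psi0 tQ = 0 := by
  rw [gC]
  simp only [eval₂_sub, eval₂_pow, eval₂_mul, eval₂_X, eval₂_C, eval₂_one, map_sub, map_one,
    psi0_aRt]
  linear_combination (sQinv * (1 - tQ)) * hQ1 - sQinv * hQ2
    - (tQ ^ 2 - sQ * tQ - 1 + sQ) * hsQ

/-- The map `C → Q`. -/
noncomputable def PsiC : RingC →+* RingQ := AdjoinRoot.lift psi0 tQ gC_eval

lemma PsiC_rC : PsiC rC = tQ := AdjoinRoot.lift_root gC_eval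

lemma PsiC_of (x : RingA) : PsiC (AdjoinRoot.of gC x) = psi0 x := AdjoinRoot.lift_of gC_eval

lemma PsiC_aC : PsiC aC = sQ := by rw [aC_def, PsiC_of, psi0_aRt]

/-- `s` as a unit in `R`. -/
noncomputable def nuS : GroupRingZ2ˣ :=
  ⟨AddMonoidAlgebra.single (1, 0) 1, AddMonoidAlgebra.single (-1, 0) 1,
    by rw [single_mul_single', show ((1, 0) : ℤ × ℤ) + (-1, 0) = 0 by simp,
      ← AddMonoidAlgebra.one_def],
    by rw [single_mul_single', show ((-1, 0) : ℤ × ℤ) + (1, 0) = 0 by simp,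
      ← AddMonoidAlgebra.one_def]⟩

/-- `t` as a unit in `R`. -/
noncomputable def nuT : GroupRingZ2ˣ :=
  ⟨AddMonoidAlgebra.single (0, 1) 1, AddMonoidAlgebra.single (0, -1) 1,
    by rw [single_mul_single', show ((0, 1) : ℤ × ℤ) + (0, -1) = 0 by simp,
      ← AddMonoidAlgebra.one_def],
    by rw [single_mul_single', show ((0, -1) : ℤ × ℤ) + (0, 1) = 0 by simp,
      ← AddMonoidAlgebra.one_def]⟩

lemma nuS_zpow (a : ℤ) : ((nuS ^ a : GroupRingZ2ˣ) : GroupRingZ2)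
    = AddMonoidAlgebra.single (a, 0) 1 := by
  induction a using Int.induction_on with
  | zero => rw [zpow_zero, Units.val_one, AddMonoidAlgebra.one_def, Prod.mk_zero_zero]
  | succ n ih =>
      rw [zpow_add_one, Units.val_mul, ih, show ((nuS : GroupRingZ2ˣ) : GroupRingZ2)
        = AddMonoidAlgebra.single (1, 0) 1 from rfl, single_mul_single',
        show ((n : ℤ), (0 : ℤ)) + (1, 0) = ((n : ℤ) + 1, 0) by simp]
  | pred n ih =>
      rw [zpow_sub_one, Units.val_mul, ih, show ((nuS⁻¹ : GroupRingZ2ˣ) : GroupRingZ2)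
        = AddMonoidAlgebra.single (-1, 0) 1 from rfl, single_mul_single',
        show ((-n : ℤ), (0 : ℤ)) + (-1, 0) = (-(n : ℤ) - 1, 0) by
          rw [Prod.mk_add_mk]; norm_num; ring]

lemma nuT_zpow (b : ℤ) : ((nuT ^ b : GroupRingZ2ˣ) : GroupRingZ2)
    = AddMonoidAlgebra.single (0, b) 1 := by
  induction b using Int.induction_on with
  | zero => rw [zpow_zero, Units.val_one, AddMonoidAlgebra.one_def, Prod.mk_zero_zero]
  | succ n ih =>
      rw [zpow_add_one, Units.val_mul, ih, show ((nuT : GroupRingZ2ˣ) : GroupRingZ2)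
        = AddMonoidAlgebra.single (0, 1) 1 from rfl, single_mul_single',
        show ((0 : ℤ), (n : ℤ)) + (0, 1) = (0, (n : ℤ) + 1) by simp]
  | pred n ih =>
      rw [zpow_sub_one, Units.val_mul, ih, show ((nuT⁻¹ : GroupRingZ2ˣ) : GroupRingZ2)
        = AddMonoidAlgebra.single (0, -1) 1 from rfl, single_mul_single',
        show ((0 : ℤ), (-n : ℤ)) + (0, -1) = (0, -(n : ℤ) - 1) by
          rw [Prod.mk_add_mk]; norm_num; ring]

lemma single_eq_units (p : ℤ × ℤ) :
    (AddMonoidAlgebra.single p 1 : GroupRingZ2)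
      = ((nuS ^ p.1 * nuT ^ p.2 : GroupRingZ2ˣ) : GroupRingZ2) := by
  rw [Units.val_mul, nuS_zpow, nuT_zpow, single_mul_single']
  norm_num

lemma hom_units {R S : Type*} [CommRing R] [CommRing S] (f : R →+* S) (u v : Rˣ) (a b : ℤ) :
    f ((u ^ a * v ^ b : Rˣ) : R)
      = ((Units.map (f : R →* S) u ^ a * Units.map (f : R →* S) v ^ b : Sˣ) : S) := by
  have h := Units.coe_map (f : R →* S) (u ^ a * v ^ b)
  rw [map_mul, map_zpow, map_zpow] at h
  exact h.symm

lemma psiC_unit_u : Units.map (PsiC : RingC →* RingQ) uC = Units.map (mkQ : GroupRingZ2 →* RingQ) nuS := by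
  ext
  show PsiC aC = mkQ (AddMonoidAlgebra.single (1, 0) 1)
  rw [PsiC_aC, sQ, sGen]

lemma psiC_unit_v : Units.map (PsiC : RingC →* RingQ) vC = Units.map (mkQ : GroupRingZ2 →* RingQ) nuT := by
  ext
  show PsiC rC = mkQ (AddMonoidAlgebra.single (0, 1) 1)
  rw [PsiC_rC, tQ, tGen]

lemma comp1 : PsiC.comp PhiQ = RingHom.id RingQ := by
  apply Ideal.Quotient.ringHom_ext
  show (PsiC.comp PhiQ).comp mkQ = (RingHom.id RingQ).comp mkQ
  apply AddMonoidAlgebra.ringHom_ext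
  · intro b
    have hb : (AddMonoidAlgebra.single (0 : ℤ × ℤ) b : GroupRingZ2)
        = AddMonoidAlgebra.singleZeroRingHom b := rfl
    rw [hb, ← RingHom.comp_apply, ← RingHom.comp_apply]
    exact RingHom.congr_fun (Subsingleton.elim _ _) b
  · intro p
    show PsiC (PhiQ (mkQ (AddMonoidAlgebra.single p 1))) = mkQ (AddMonoidAlgebra.single p 1)
    rw [PhiQ_mk, phi_single, hom_units, psiC_unit_u, psiC_unit_v, ← hom_units,
      ← single_eq_units]

lemma key : PhiQ.comp psi0 = (AdjoinRoot.of gC : RingA →+* RingC) := by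
  have h : (PhiQ.comp psi0).toIntAlgHom = (AdjoinRoot.of gC : RingA →+* RingC).toIntAlgHom := by
    apply AdjoinRoot.algHom_ext
    show PhiQ (psi0 (root fA)) = AdjoinRoot.of gC (root fA)
    rw [← aRt_def, psi0_aRt, sQ, PhiQ_mk, phi_sGen, aC_def]
  exact congrArg AlgHom.toRingHom h

lemma comp2 : PhiQ.comp PsiC = RingHom.id RingC := by
  let e1 : RingC →ₐ[RingA] RingC :=
    { toRingHom := PhiQ.comp PsiC
      commutes' := fun a => by
        show PhiQ (PsiC (algebraMap RingA RingC a)) = algebraMap RingA RingC a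
        rw [AdjoinRoot.algebraMap_eq, PsiC_of]
        exact RingHom.congr_fun key a }
  have h : e1 = AlgHom.id RingA RingC := by
    apply AdjoinRoot.algHom_ext
    show PhiQ (PsiC (root gC)) = root gC
    rw [← rC_def, PsiC_rC, tQ, PhiQ_mk, phi_tGen]
  exact RingHom.ext fun x => AlgHom.congr_fun h x

/-- The ring isomorphism `Q ≃+* C`. -/
noncomputable def QequivC : RingQ ≃+* RingC := RingEquiv.ofRingHom PhiQ PsiC comp2 comp1

noncomputable def pbA : PowerBasis ℤ RingA := AdjoinRoot.powerBasis' fA_monic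
noncomputable def pbC : PowerBasis RingA RingC := AdjoinRoot.powerBasis' gC_monic

instance : Module.Free ℤ RingA := Module.Free.of_basis pbA.basis
instance : Module.Free RingA RingC := Module.Free.of_basis pbC.basis
instance : Module.Free ℤ RingC := Module.Free.of_basis (pbA.basis.smulTower pbC.basis)

lemma rankA : Module.rank ℤ RingA = 2 := by
  rw [rank_eq_card_basis pbA.basis]
  simp [pbA, AdjoinRoot.powerBasis', fA_natDegree]

lemma rankC : Module.rank RingA RingC = 2 := by
  rw [rank_eq_card_basis pbC.basis]
  simp [pbC, AdjoinRoot.powerBasis', gC_natDegree]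

lemma rankZC : Module.rank ℤ RingC = 4 := by
  rw [← rank_mul_rank ℤ RingA RingC, rankA, rankC]
  norm_num

/-- The additive group of `R/(R·(1 − s + s²) + R·((1 + st)(1 − t)))` is free abelian of
rank 4, where `R = ℤ[s,s⁻¹,t,t⁻¹]`.  (This computes the abelianisation of the derived
group of the Artin group of type `B₃`.) -/
theorem quotient_free_rank_four :
    Module.Free ℤ
        (GroupRingZ2 ⧸ Ideal.span {1 - sGen + sGen ^ 2, (1 + sGen * tGen) * (1 - tGen)}) ∧
      Module.rank ℤ
        (GroupRingZ2 ⧸ Ideal.span {1 - sGen + sGen ^ 2, (1 + sGen * tGen) * (1 - tGen)}) = 4 := by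
  have e : RingQ ≃ₗ[ℤ] RingC := QequivC.toAddEquiv.toIntLinearEquiv
  constructor
  · exact Module.Free.of_equiv e.symm
  · show Module.rank ℤ RingQ = 4
    exact e.rank_eq.trans rankZC
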